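/- Let f : R^n → R be convex differentiable with ∇f L-Lipschitz, λ, μ > 0, and H(x) = f(x) + λ‖x‖₀. Suppose x ∈ argmin_z λ‖z‖₀ + (L/2)‖z − y + ∇f(y)/L‖² + (μ/2)‖z − y‖², and suppose ‖y‖₀ ≤ ‖w‖₀ and f(y) ≤ f(w) for some w. Then H(x) + (μ/2)‖x − y‖² ≤ H(w). -/

import Mathlib

open scoped Classical

/-- `‖x‖₀`: the number of nonzero components of `x`. -/
noncomputable def norm0 {n : ℕ} (x : EuclideanSpace ℝ (Fin n)) : ℕ :=
  (Finset.univ.filter fun i => x i ≠ 0).card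

open scoped RealInnerProductSpace

open InnerProductSpace in
lemma descent_lemma_aux {n : ℕ} (f : EuclideanSpace ℝ (Fin n) → ℝ)
    (gradf : EuclideanSpace ℝ (Fin n) → EuclideanSpace ℝ (Fin n))
    (hf : ∀ z, HasGradientAt f (gradf z) z) (L : ℝ) (hL : 0 < L)
    (hLip : ∀ u v, ‖gradf u - gradf v‖ ≤ L * ‖u - v‖)
    (x y : EuclideanSpace ℝ (Fin n)) :
    f x ≤ f y + ⟪gradf y, x - y⟫ + L / 2 * ‖x - y‖ ^ 2 := by
  set v := x - y with hv
  have hcont : Continuous gradf := by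
    refine (LipschitzWith.of_dist_le_mul (K := Real.toNNReal L) fun a b => ?_).continuous
    rw [dist_eq_norm, dist_eq_norm]
    simpa [Real.coe_toNNReal _ hL.le] using hLip a b
  have hpath : Continuous fun t : ℝ => y + t • v := by
    exact continuous_const.add (continuous_id.smul continuous_const)
  have hderiv : ∀ t : ℝ, HasDerivAt (fun t : ℝ => f (y + t • v))
      (⟪gradf (y + t • v), v⟫) t := by
    intro t
    have h1 : HasDerivAt (fun t : ℝ => y + t • v) v t := by
      simpa using ((hasDerivAt_id t).smul_const v).const_add y
    have h2 : HasFDerivAt f (toDual ℝ _ (gradf (y + t • v))) (y + t • v) := hf _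
    simpa [Function.comp_def] using h2.comp_hasDerivAt t h1
  have hcont1 : Continuous fun t : ℝ => ⟪gradf (y + t • v), v⟫ :=
    Continuous.inner (hcont.comp hpath) continuous_const
  have hInt : IntervalIntegrable (fun t : ℝ => ⟪gradf (y + t • v), v⟫)
      MeasureTheory.volume 0 1 := hcont1.intervalIntegrable _ _
  have key : f x - f y = ∫ t in (0:ℝ)..1, ⟪gradf (y + t • v), v⟫ := by
    have h := intervalIntegral.integral_eq_sub_of_hasDerivAt
      (f := fun t : ℝ => f (y + t • v)) (fun t _ => hderiv t) hInt
    rw [h]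
    simp [hv]
  have hcq : Continuous fun t : ℝ => L * t * ‖v‖ ^ 2 :=
    (continuous_const.mul continuous_id).mul continuous_const
  have hInt2 : IntervalIntegrable (fun t : ℝ => ⟪gradf y, v⟫ + L * t * ‖v‖ ^ 2)
      MeasureTheory.volume 0 1 :=
    (continuous_const.add hcq).intervalIntegrable _ _
  have hmono : (∫ t in (0:ℝ)..1, ⟪gradf (y + t • v), v⟫)
      ≤ ∫ t in (0:ℝ)..1, (⟪gradf y, v⟫ + L * t * ‖v‖ ^ 2) := by
    apply intervalIntegral.integral_mono_on (by norm_num) hInt hInt2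
    intro t ht
    obtain ⟨ht0, ht1⟩ := ht
    have h1 : ⟪gradf (y + t • v) - gradf y, v⟫ ≤ ‖gradf (y + t • v) - gradf y‖ * ‖v‖ :=
      real_inner_le_norm _ _
    have h2 : ‖gradf (y + t • v) - gradf y‖ ≤ L * (t * ‖v‖) := by
      have := hLip (y + t • v) y
      simpa [norm_smul, abs_of_nonneg ht0] using this
    have h3 : ‖gradf (y + t • v) - gradf y‖ * ‖v‖ ≤ L * (t * ‖v‖) * ‖v‖ :=
      mul_le_mul_of_nonneg_right h2 (norm_nonneg _)
    have h4 : ⟪gradf (y + t • v), v⟫ = ⟪gradf y, v⟫ + ⟪gradf (y + t • v) - gradf y, v⟫ := by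
      rw [← inner_add_left]
      congr 1
      abel
    have h5 : L * (t * ‖v‖) * ‖v‖ = L * t * ‖v‖ ^ 2 := by ring
    rw [h4]
    linarith [h1.trans (h5 ▸ h3)]
  have hval : (∫ t in (0:ℝ)..1, (⟪gradf y, v⟫ + L * t * ‖v‖ ^ 2))
      = ⟪gradf y, v⟫ + L / 2 * ‖v‖ ^ 2 := by
    rw [intervalIntegral.integral_add intervalIntegrable_const (hcq.intervalIntegrable _ _)]
    have heq : (fun t : ℝ => L * t * ‖v‖ ^ 2) = fun t : ℝ => (L * ‖v‖ ^ 2) * t := by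
      funext t; ring
    rw [heq, intervalIntegral.integral_const_mul, integral_id]
    simp
    ring
  linarith [key ▸ hmono.trans_eq hval]

theorem sufficient_decrease {n : ℕ}
    (f : EuclideanSpace ℝ (Fin n) → ℝ)
    (gradf : EuclideanSpace ℝ (Fin n) → EuclideanSpace ℝ (Fin n))
    (hconv : ConvexOn ℝ Set.univ f)
    (hf : ∀ z, HasGradientAt f (gradf z) z)
    (L lam μ : ℝ) (hL : 0 < L) (hlam : 0 < lam) (hμ : 0 < μ)
    (hLip : ∀ u v, ‖gradf u - gradf v‖ ≤ L * ‖u - v‖)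
    (x y w : EuclideanSpace ℝ (Fin n))
    (hx : ∀ z : EuclideanSpace ℝ (Fin n),
        lam * (norm0 x : ℝ) + L / 2 * ‖x - y + (1 / L) • gradf y‖ ^ 2
          + μ / 2 * ‖x - y‖ ^ 2
        ≤ lam * (norm0 z : ℝ) + L / 2 * ‖z - y + (1 / L) • gradf y‖ ^ 2
          + μ / 2 * ‖z - y‖ ^ 2)
    (h0 : norm0 y ≤ norm0 w) (hfy : f y ≤ f w) :
    f x + lam * (norm0 x : ℝ) + μ / 2 * ‖x - y‖ ^ 2
      ≤ f w + lam * (norm0 w : ℝ) := by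
  have key := hx y
  have hexp : ‖x - y + (1 / L) • gradf y‖ ^ 2
      = ‖x - y‖ ^ 2 + 2 * ((1 / L) * ⟪gradf y, x - y⟫) + ‖(1 / L) • gradf y‖ ^ 2 := by
    rw [norm_add_sq_real, real_inner_smul_right, real_inner_comm]
  have hyy : ‖y - y + (1 / L) • gradf y‖ ^ 2 = ‖(1 / L) • gradf y‖ ^ 2 := by
    simp
  rw [hexp, hyy] at key
  rw [show ‖y - y‖ = (0:ℝ) by simp] at key
  have halg : L / 2 * (‖x - y‖ ^ 2 + 2 * ((1 / L) * ⟪gradf y, x - y⟫)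
        + ‖(1 / L) • gradf y‖ ^ 2)
      = L / 2 * ‖x - y‖ ^ 2 + ⟪gradf y, x - y⟫ + L / 2 * ‖(1 / L) • gradf y‖ ^ 2 := by
    field_simp
  rw [halg] at key
  have hdesc := descent_lemma_aux f gradf hf L hL hLip x y
  have hcast : lam * (norm0 y : ℝ) ≤ lam * (norm0 w : ℝ) :=
    mul_le_mul_of_nonneg_left (Nat.cast_le.mpr h0) hlam.le
  have h02 : μ / 2 * (0:ℝ) ^ 2 = 0 := by norm_num
  rw [h02, add_zero] at key
  linarith
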